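/- The sequence (1/4)·n!/(n-6)!·(n-6)^(n-6)/n^(n-2) + n(n-1)(n-2)(n-3)^(n-4)/n^(n-2), divided by ((1/2)·n(n-1)(n-2)(n-3)^(n-4)/n^(n-2))^2, tends to 1 as n → ∞. -/

import Mathlib

set_option maxHeartbeats 1000000

open Filter Real

private lemma aux_atop (c : ℝ) : Tendsto (fun m : ℕ => (m:ℝ) + c) atTop atTop :=
  tendsto_atTop_add_const_right _ c tendsto_natCast_atTop_atTop

private lemma aux_ratio (a b : ℝ) (hb : 0 < b) :
    Tendsto (fun m : ℕ => ((m:ℝ) + a)/((m:ℝ) + b)) atTop (nhds 1) := by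
  have h0 : Tendsto (fun m : ℕ => (a-b)/((m:ℝ)+b)) atTop (nhds 0) :=
    tendsto_const_nhds.div_atTop (aux_atop b)
  have h1 := h0.const_add 1
  rw [add_zero] at h1
  refine h1.congr fun m => ?_
  have hmb : ((m:ℝ)+b) ≠ 0 := by positivity
  field_simp
  ring

private lemma aux_key (m : ℕ) (x : ℝ) (hx0 : (0:ℝ) ≤ x) (F : ℝ)
    (hfact : F = ((x+2)*(x+3)*(x+4)*(x+5)*(x+6)*(x+7))) :
    (((1 / 4 : ℝ) * F * (x+1) ^ (m+1) / (x+7) ^ (m+5))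
          + (x+7) * (x+6) * (x+5) * (x+4) ^ (m+3) / (x+7) ^ (m+5)) /
        (((1 / 2 : ℝ) * (x+7) * (x+6) * (x+5) * (x+4) ^ (m+3) / (x+7) ^ (m+5)) ^ 2)
    = ((x+2)*(x+3)*(x+4)/((x+7)*(x+6)*(x+5)))
        * ((1 - 9/((x+4)^2))^(m+1)) * (((x+7)/(x+4))^4)
      + (4*(x+7)/((x+6)*(x+5))) * ((1 + 3/(x+4))^(m+3)) := by
  have h1 : x + 1 > 0 := by linarith
  have h4' : x + 4 > 0 := by linarith
  have h7 : x + 7 > 0 := by linarith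
  have h3 : x + 3 > 0 := by linarith
  have h5 : x + 5 > 0 := by linarith
  have h6' : x + 6 > 0 := by linarith
  have h2' : x + 2 > 0 := by linarith
  have hb1 : (1 : ℝ) - 9/((x+4)^2) = (x+1)*(x+7)/((x+4)^2) := by
    field_simp; ring
  have hb2 : (1 : ℝ) + 3/(x+4) = (x+7)/(x+4) := by
    field_simp; ring
  rw [hfact, hb1, hb2]
  simp only [div_pow, mul_pow]
  rw [show ((x+4)^2)^(m+1) = ((x+4)^m)^2*(x+4)^2 by
        rw [← pow_mul, show 2*(m+1) = m*2+2 by ring, pow_add, pow_mul],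
      show (x+1)^(m+1) = (x+1)^m*(x+1) by ring,
      show (x+7)^(m+1) = (x+7)^m*(x+7) by ring,
      show (x+4)^(m+3) = (x+4)^m*(x+4)^3 by ring,
      show (x+7)^(m+5) = (x+7)^m*(x+7)^5 by ring,
      show (x+7)^(m+3) = (x+7)^m*(x+7)^3 by ring]
  have ha : (x+1)^m ≠ 0 := by positivity
  have hbb : (x+4)^m ≠ 0 := by positivity
  have hcc : (x+7)^m ≠ 0 := by positivity
  field_simp
  ring

theorem ratio_tendsto_one :
    Tendsto (fun n : ℕ =>
        (((1 / 4 : ℝ) * ((n.factorial : ℝ) / ((n - 6).factorial : ℝ)) * ((n : ℝ) - 6) ^ (n - 6)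
              / (n : ℝ) ^ (n - 2))
          + (n : ℝ) * (n - 1) * (n - 2) * ((n : ℝ) - 3) ^ (n - 4) / (n : ℝ) ^ (n - 2)) /
        (((1 / 2 : ℝ) * n * (n - 1) * (n - 2) * ((n : ℝ) - 3) ^ (n - 4) / (n : ℝ) ^ (n - 2)) ^ 2))
      atTop (nhds 1) := by
  rw [← tendsto_add_atTop_iff_nat 7]
  have hx0 : ∀ m : ℕ, (0:ℝ) ≤ (m:ℝ) := fun m => Nat.cast_nonneg m
  -- the simplified form
  set g : ℕ → ℝ := fun m =>
    (((m:ℝ)+2)*((m:ℝ)+3)*((m:ℝ)+4)/(((m:ℝ)+7)*((m:ℝ)+6)*((m:ℝ)+5)))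
        * ((1 - 9/(((m:ℝ)+4)^2))^(m+1)) * ((((m:ℝ)+7)/((m:ℝ)+4))^4)
      + (4*((m:ℝ)+7)/(((m:ℝ)+6)*((m:ℝ)+5))) * ((1 + 3/((m:ℝ)+4))^(m+3)) with hg
  have hgt : Tendsto g atTop (nhds 1) := by
    have hP : Tendsto (fun m : ℕ =>
        ((m:ℝ)+2)*((m:ℝ)+3)*((m:ℝ)+4)/(((m:ℝ)+7)*((m:ℝ)+6)*((m:ℝ)+5))) atTop (nhds 1) := by
      have := ((aux_ratio 2 7 (by norm_num)).mul (aux_ratio 3 6 (by norm_num))).mul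
        (aux_ratio 4 5 (by norm_num))
      rw [(show (1:ℝ)*1*1 = 1 by norm_num)] at this
      refine this.congr fun m => ?_
      rw [div_mul_div_comm, div_mul_div_comm]
    have hQ : Tendsto (fun m : ℕ => (1 - 9/(((m:ℝ)+4)^2))^(m+1)) atTop (nhds 1) := by
      have hlow : Tendsto (fun m : ℕ => 1 - (9*(((m:ℝ)+1)/((m:ℝ)+4)))/((m:ℝ)+4))
          atTop (nhds 1) := by
        have h0 : Tendsto (fun m : ℕ => (9*(((m:ℝ)+1)/((m:ℝ)+4)))/((m:ℝ)+4)) atTop (nhds 0) :=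
          ((aux_ratio 1 4 (by norm_num)).const_mul 9).div_atTop (aux_atop 4)
        have := (tendsto_const_nhds (x := (1:ℝ)) (f := atTop)).sub h0
        rwa [sub_zero] at this
      refine tendsto_of_tendsto_of_tendsto_of_le_of_le hlow tendsto_const_nhds
        (fun m => ?_) (fun m => ?_)
      · -- lower bound: Bernoulli
        have h4 : (0:ℝ) < (m:ℝ)+4 := by have := hx0 m; linarith
        have hsmall : 9/(((m:ℝ)+4)^2) ≤ 1 := by
          rw [div_le_one (by positivity)]
          nlinarith [hx0 m]
        have hA : (-2:ℝ) ≤ -(9/(((m:ℝ)+4)^2)) := by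
          have : (0:ℝ) ≤ 9/(((m:ℝ)+4)^2) := by positivity
          linarith
        have hber := one_add_mul_le_pow hA (m+1)
        calc 1 - (9*(((m:ℝ)+1)/((m:ℝ)+4)))/((m:ℝ)+4)
            = 1 + ((m+1 : ℕ):ℝ) * (-(9/(((m:ℝ)+4)^2))) := by
              push_cast
              field_simp
              ring
          _ ≤ (1 + -(9/(((m:ℝ)+4)^2)))^(m+1) := hber
          _ = (1 - 9/(((m:ℝ)+4)^2))^(m+1) := by rw [← sub_eq_add_neg]
      · -- upper bound ≤ 1
        have h4 : (0:ℝ) < (m:ℝ)+4 := by have := hx0 m; linarith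
        have hsmall : 9/(((m:ℝ)+4)^2) ≤ 1 := by
          rw [div_le_one (by positivity)]
          nlinarith [hx0 m]
        have hnn : (0:ℝ) ≤ 1 - 9/(((m:ℝ)+4)^2) := by linarith
        have hle : (1:ℝ) - 9/(((m:ℝ)+4)^2) ≤ 1 := by
          have : (0:ℝ) ≤ 9/(((m:ℝ)+4)^2) := by positivity
          linarith
        exact pow_le_one₀ hnn hle
    have hS : Tendsto (fun m : ℕ => (((m:ℝ)+7)/((m:ℝ)+4))^4) atTop (nhds 1) := by
      have := (aux_ratio 7 4 (by norm_num)).pow 4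
      rwa [one_pow] at this
    have hT2 : Tendsto (fun m : ℕ =>
        (4*((m:ℝ)+7)/(((m:ℝ)+6)*((m:ℝ)+5))) * ((1 + 3/((m:ℝ)+4))^(m+3))) atTop (nhds 0) := by
      have hpref : Tendsto (fun m : ℕ => 4*((m:ℝ)+7)/(((m:ℝ)+6)*((m:ℝ)+5))) atTop (nhds 0) := by
        have h0 : Tendsto (fun m : ℕ => (4*(((m:ℝ)+7)/((m:ℝ)+6)))/((m:ℝ)+5)) atTop (nhds 0) :=
          ((aux_ratio 7 6 (by norm_num)).const_mul 4).div_atTop (aux_atop 5)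
        refine h0.congr fun m => ?_
        have h6 : ((m:ℝ)+6) ≠ 0 := by positivity
        have h5 : ((m:ℝ)+5) ≠ 0 := by positivity
        field_simp
      have hup : Tendsto (fun m : ℕ =>
          (4*((m:ℝ)+7)/(((m:ℝ)+6)*((m:ℝ)+5))) * Real.exp 3) atTop (nhds 0) := by
        have := hpref.mul_const (Real.exp 3)
        rwa [zero_mul] at this
      refine tendsto_of_tendsto_of_tendsto_of_le_of_le tendsto_const_nhds hup
        (fun m => ?_) (fun m => ?_)
      · have h4 : (0:ℝ) < (m:ℝ)+4 := by have := hx0 m; linarith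
        positivity
      · have h4 : (0:ℝ) < (m:ℝ)+4 := by have := hx0 m; linarith
        have hprefnn : (0:ℝ) ≤ 4*((m:ℝ)+7)/(((m:ℝ)+6)*((m:ℝ)+5)) := by positivity
        have hexp : (1 + 3/((m:ℝ)+4))^(m+3) ≤ Real.exp 3 := by
          have hstep : (1:ℝ) + 3/((m:ℝ)+4) ≤ Real.exp (3/((m:ℝ)+4)) := by
            have := Real.add_one_le_exp (3/((m:ℝ)+4))
            linarith
          have hnn : (0:ℝ) ≤ 1 + 3/((m:ℝ)+4) := by positivity
          calc (1 + 3/((m:ℝ)+4))^(m+3)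
              ≤ (Real.exp (3/((m:ℝ)+4)))^(m+3) := pow_le_pow_left₀ hnn hstep (m+3)
            _ = Real.exp (((m+3 : ℕ):ℝ) * (3/((m:ℝ)+4))) := (Real.exp_nat_mul _ (m+3)).symm
            _ ≤ Real.exp 3 := by
                apply Real.exp_le_exp.mpr
                rw [mul_div_assoc']
                rw [div_le_iff₀ h4]
                push_cast
                nlinarith [hx0 m]
        exact mul_le_mul_of_nonneg_left hexp hprefnn
    have := ((hP.mul hQ).mul hS).add hT2
    rw [(show (1:ℝ)*1*1+0 = 1 by norm_num)] at this
    exact this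
  refine hgt.congr fun m => ?_
  -- pointwise identity g m = original at m+7
  have hx : (0:ℝ) ≤ (m:ℝ) := hx0 m
  show g m = _
  rw [hg]
  simp only []
  have e6 : m + 7 - 6 = m + 1 := by omega
  have e4 : m + 7 - 4 = m + 3 := by omega
  have e2 : m + 7 - 2 = m + 5 := by omega
  rw [e6, e4, e2]
  have hfq : (((m+7).factorial : ℝ)) / (((m+1).factorial : ℝ))
      = ((m:ℝ)+2)*((m:ℝ)+3)*((m:ℝ)+4)*((m:ℝ)+5)*((m:ℝ)+6)*((m:ℝ)+7) := by
    have hnat : (m+7).factorial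
        = (m+1).factorial * ((m+2)*(m+3)*(m+4)*(m+5)*(m+6)*(m+7)) := by
      simp [show m+7 = (m+6)+1 from rfl, show m+6 = (m+5)+1 from rfl,
        show m+5 = (m+4)+1 from rfl, show m+4 = (m+3)+1 from rfl,
        show m+3 = (m+2)+1 from rfl, show m+2 = (m+1)+1 from rfl, Nat.factorial_succ]
      ring
    have hne : (((m+1).factorial : ℝ)) ≠ 0 := by positivity
    rw [hnat]
    push_cast
    field_simp
  push_cast
  rw [hfq]
  rw [show ((m:ℝ)+7)-6 = (m:ℝ)+1 by ring, show ((m:ℝ)+7)-3 = (m:ℝ)+4 by ring,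
      show ((m:ℝ)+7)-1 = (m:ℝ)+6 by ring, show ((m:ℝ)+7)-2 = (m:ℝ)+5 by ring]
  exact (aux_key m ((m:ℝ)) hx _ rfl).symm
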